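/- arXiv:2503.16092 — 3 statements merged into one kernel-verified Lean document; each statement's English description precedes it below -/
import Mathlib

section
/- Let U be a complex Hilbert space, let φ : U → U be continuous and monotone (Re⟨φ(u₂) − φ(u₁), u₂ − u₁⟩ ≥ 0 for all u₁, u₂), and let Q ∈ L(U) be a bounded linear operator with Re⟨Qu, u⟩ ≥ c‖u‖² for all u ∈ U and some c > 0. Then for all u, r ∈ U the equation y = r + Q φ(u − y) has a unique solution y ∈ U. -/
open scoped InnerProductSpace
open Module Submodule Filter

universe u

section helpers
variable {V : Type u} [NormedAddCommGroup V] [InnerProductSpace ℝ V]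

lemma proj_inner (K : Submodule ℝ V) [HasOrthogonalProjection K] (a : V) {w : V}
    (hw : w ∈ K) : ⟪(orthogonalProjection K a : V), w⟫_ℝ = ⟪a, w⟫_ℝ := by
  have h := Submodule.starProjection_inner_eq_zero (K := K) a w hw
  rw [inner_sub_left, sub_eq_zero] at h
  exact h.symm

lemma proj_inner_sub (K : Submodule ℝ V) [HasOrthogonalProjection K] (a₁ a₂ : V) (w : ↥K) :
    ⟪orthogonalProjection K a₁ - orthogonalProjection K a₂, w⟫_ℝ = ⟪a₁ - a₂, (w : V)⟫_ℝ := by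
  rw [Submodule.coe_inner]
  push_cast
  rw [inner_sub_left, proj_inner K a₁ w.2, proj_inner K a₂ w.2, ← inner_sub_left]

lemma mono_uniq {c : ℝ} (hc : 0 < c) {S : V → V}
    (hmono : ∀ x y : V, c * ‖x - y‖ ^ 2 ≤ ⟪S x - S y, x - y⟫_ℝ)
    {x y : V} (h : S x = S y) : x = y := by
  have h2 := hmono x y
  rw [h, sub_self, inner_zero_left] at h2
  have h3 : ‖x - y‖ = 0 := by
    by_contra h4
    have h5 : 0 < ‖x - y‖ := lt_of_le_of_ne (norm_nonneg _) (Ne.symm h4)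
    nlinarith [mul_pos hc (mul_pos h5 h5)]
  rwa [norm_sub_eq_zero_iff] at h3

lemma cx_le {c x N : ℝ} (hc : 0 < c) (hx : 0 ≤ x) (hN : 0 ≤ N) (h : c * x ^ 2 ≤ N * x) :
    c * x ≤ N := by
  rcases eq_or_lt_of_le hx with h0 | h0
  · rw [← h0]; simpa using hN
  · have h1 : (c * x) * x ≤ N * x := by nlinarith
    exact (mul_le_mul_iff_of_pos_right h0).mp h1

/-- Transfer of the strongly monotone solvability to the projected problem on a subspace. -/
lemma galerkin_exists (K : Submodule ℝ V) [HasOrthogonalProjection K]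
    {c : ℝ} (hc : 0 < c) (S : V → V) (hS : Continuous S)
    (hmono : ∀ x y : V, c * ‖x - y‖ ^ 2 ≤ ⟪S x - S y, x - y⟫_ℝ)
    (hsolve : ∀ T : ↥K → ↥K, Continuous T →
      (∀ x y : ↥K, c * ‖x - y‖ ^ 2 ≤ ⟪T x - T y, x - y⟫_ℝ) → ∀ β : ↥K, ∃ w, T w = β)
    (b : V) : ∃ w : ↥K, orthogonalProjection K (S ↑w) = orthogonalProjection K b := by
  apply hsolve (fun w => orthogonalProjection K (S ↑w))
    ((orthogonalProjection K).continuous.comp (hS.comp continuous_subtype_val))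
  intro x y
  rw [proj_inner_sub]
  have hco : ((x - y : ↥K) : V) = (x : V) - y := by push_cast; ring
  have hnc : ‖x - y‖ = ‖(x : V) - (y : V)‖ := by rw [Submodule.coe_norm, hco]
  rw [hco, hnc]
  exact hmono _ _

end helpers

/-- surjectivity of continuous strongly monotone maps in finite dimension -/
lemma minty_fd : ∀ (n : ℕ) {V : Type u} [NormedAddCommGroup V] [InnerProductSpace ℝ V]
    [FiniteDimensional ℝ V], finrank ℝ V = n → ∀ {c : ℝ}, 0 < c → ∀ (S : V → V), Continuous S →
    (∀ x y : V, c * ‖x - y‖ ^ 2 ≤ ⟪S x - S y, x - y⟫_ℝ) → ∀ b : V, ∃ x, S x = b := by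
  intro n
  induction n with
  | zero =>
    intro V _ _ _ hn c hc S hS hmono b
    have : Subsingleton V := finrank_zero_iff.mp hn
    exact ⟨b, Subsingleton.elim _ _⟩
  | succ n ih =>
    intro V _ _ _ hn c hc S hS hmono b
    have hpos : 0 < finrank ℝ V := by omega
    haveI : Nontrivial V := finrank_pos_iff.mp hpos
    obtain ⟨e, he⟩ := exists_ne (0 : V)
    set W : Submodule ℝ V := (ℝ ∙ e)ᗮ with hWdef
    have hWrank : finrank ℝ W = n := by
      have h1 : finrank ℝ (ℝ ∙ e) = 1 := finrank_span_singleton he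
      have h2 := Submodule.finrank_add_finrank_orthogonal (K := ℝ ∙ e)
      rw [← hWdef] at h2
      omega
    -- solve the projected problem for each t
    have hex : ∀ t : ℝ, ∃ w : ↥W, orthogonalProjection W (S (↑w + t • e)) =
        orthogonalProjection W b := by
      intro t
      have hmt : ∀ x y : V, c * ‖x - y‖ ^ 2 ≤ ⟪S (x + t • e) - S (y + t • e), x - y⟫_ℝ := by
        intro x y
        have h1 := hmono (x + t • e) (y + t • e)
        have h2 : (x + t • e) - (y + t • e) = x - y := by abel
        rwa [h2] at h1
      exact galerkin_exists W hc _ (hS.comp (continuous_id.add continuous_const)) hmt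
        (fun T hT hm => ih hWrank hc T hT hm) b
    choose wt hwt using hex
    -- continuity of t ↦ wt t
    have hwcont : Continuous wt := by
      rw [continuous_iff_continuousAt]
      intro s
      have hb : ∀ t, c * ‖wt t - wt s‖ ≤
          ‖S (↑(wt s) + s • e) - S (↑(wt s) + t • e)‖ := by
        intro t
        have h0 : c * ‖wt t - wt s‖ ^ 2 ≤
            ⟪orthogonalProjection W (S (↑(wt t) + t • e)) -
              orthogonalProjection W (S (↑(wt s) + t • e)), wt t - wt s⟫_ℝ := by
          rw [proj_inner_sub]
          have hco : ((wt t - wt s : ↥W) : V) = (↑(wt t) + t • e) - (↑(wt s) + t • e) := by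
            push_cast; abel
          have hnc : ‖wt t - wt s‖ = ‖(↑(wt t) + t • e) - (↑(wt s) + t • e)‖ := by
            rw [Submodule.coe_norm, hco]
          rw [hco, hnc]
          exact hmono _ _
        rw [hwt t, ← hwt s, proj_inner_sub] at h0
        have h2 := real_inner_le_norm (S (↑(wt s) + s • e) - S (↑(wt s) + t • e))
          ((wt t - wt s : ↥W) : V)
        rw [← Submodule.coe_norm] at h2
        exact cx_le hc (norm_nonneg _) (norm_nonneg _) (h0.trans h2)
      rw [ContinuousAt, tendsto_iff_dist_tendsto_zero]
      have hzero : Tendsto (fun t : ℝ =>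
          ‖S (↑(wt s) + s • e) - S (↑(wt s) + t • e)‖ / c) (nhds s) (nhds 0) := by
        have hcont2 : Continuous fun t : ℝ =>
            ‖S (↑(wt s) + s • e) - S (↑(wt s) + t • e)‖ / c :=
          ((continuous_const.sub (hS.comp (continuous_const.add
            (continuous_id.smul continuous_const)))).norm).div_const c
        have h3 := hcont2.tendsto s
        simpa using h3
      apply squeeze_zero (fun t => dist_nonneg) _ hzero
      intro t
      rw [dist_eq_norm]
      rw [le_div_iff₀ hc]
      calc ‖wt t - wt s‖ * c = c * ‖wt t - wt s‖ := mul_comm _ _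
        _ ≤ _ := hb t
    -- the scalar function ψ
    set ψ : ℝ → ℝ := fun t => ⟪S (↑(wt t) + t • e) - b, e⟫_ℝ with hψdef
    have hψcont : Continuous ψ :=
      Continuous.inner ((hS.comp ((continuous_subtype_val.comp hwcont).add
        (continuous_id.smul continuous_const))).sub continuous_const) continuous_const
    have hψmono : ∀ s t : ℝ, s ≤ t → c * ‖e‖ ^ 2 * (t - s) ≤ ψ t - ψ s := by
      intro s t hst
      have h1 := hmono (↑(wt t) + t • e) (↑(wt s) + s • e)
      have hsplit : (↑(wt t) + t • e) - (↑(wt s) + s • e) =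
          ((wt t - wt s : ↥W) : V) + (t - s) • e := by
        push_cast; rw [sub_smul]; abel
      have hperp : ⟪((wt t - wt s : ↥W) : V), e⟫_ℝ = 0 := by
        have h4 : ⟪e, ((wt t - wt s : ↥W) : V)⟫_ℝ = 0 :=
          (Submodule.mem_orthogonal (ℝ ∙ e) _).mp (wt t - wt s).2 e
            (Submodule.mem_span_singleton_self e)
        rw [real_inner_comm]; exact h4
      have hSin : ⟪S (↑(wt t) + t • e) - S (↑(wt s) + s • e),
          ((wt t - wt s : ↥W) : V)⟫_ℝ = 0 := by
        rw [← proj_inner_sub, hwt t, hwt s, sub_self, inner_zero_left]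
      have hSe : ⟪S (↑(wt t) + t • e) - S (↑(wt s) + s • e), e⟫_ℝ = ψ t - ψ s := by
        rw [hψdef]; simp only [inner_sub_left]; ring
      have hinner : ⟪S (↑(wt t) + t • e) - S (↑(wt s) + s • e),
          (↑(wt t) + t • e) - (↑(wt s) + s • e)⟫_ℝ = (t - s) * (ψ t - ψ s) := by
        rw [hsplit, inner_add_right, hSin, real_inner_smul_right, hSe]; ring
      have hnorm : (t - s) ^ 2 * ‖e‖ ^ 2 ≤ ‖(↑(wt t) + t • e) - (↑(wt s) + s • e)‖ ^ 2 := by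
        rw [hsplit, norm_add_sq_real]
        have h5 : ⟪((wt t - wt s : ↥W) : V), (t - s) • e⟫_ℝ = 0 := by
          rw [real_inner_smul_right, hperp]; ring
        have h6 : ‖(t - s) • e‖ ^ 2 = (t - s) ^ 2 * ‖e‖ ^ 2 := by
          rw [norm_smul, mul_pow, Real.norm_eq_abs, sq_abs]
        rw [h5, h6]
        nlinarith [sq_nonneg ‖((wt t - wt s : ↥W) : V)‖]
      rw [hinner] at h1
      rcases eq_or_lt_of_le hst with heq | hlt
      · rw [heq]; simp
      · have h7 : c * ((t - s) ^ 2 * ‖e‖ ^ 2) ≤ (t - s) * (ψ t - ψ s) := by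
          calc c * ((t - s) ^ 2 * ‖e‖ ^ 2) ≤ c * ‖(↑(wt t) + t • e) - (↑(wt s) + s • e)‖ ^ 2 :=
              by nlinarith
            _ ≤ (t - s) * (ψ t - ψ s) := h1
        have h8 : 0 < t - s := by linarith
        have h9 : (c * ‖e‖ ^ 2 * (t - s)) * (t - s) ≤ (ψ t - ψ s) * (t - s) := by nlinarith
        exact (mul_le_mul_iff_of_pos_right h8).mp h9
    -- find a zero of ψ by the intermediate value theorem
    have heK : 0 < c * ‖e‖ ^ 2 := by
      have : 0 < ‖e‖ := norm_pos_iff.mpr he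
      positivity
    set T : ℝ := (|ψ 0| + 1) / (c * ‖e‖ ^ 2) with hTdef
    have hT : 0 < T := div_pos (by positivity) heK
    have hKT : c * ‖e‖ ^ 2 * T = |ψ 0| + 1 := by
      rw [hTdef, mul_div_cancel₀ _ heK.ne']
    have h₁ : 0 ≤ ψ T := by
      have h := hψmono 0 T hT.le
      rw [sub_zero] at h
      nlinarith [neg_abs_le (ψ 0)]
    have h₂ : ψ (-T) ≤ 0 := by
      have h := hψmono (-T) 0 (by linarith)
      rw [sub_neg_eq_add] at h
      nlinarith [le_abs_self (ψ 0)]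
    obtain ⟨t₀, _, ht₀⟩ : ∃ t₀ ∈ Set.Icc (-T) T, ψ t₀ = 0 := by
      have hIVT := intermediate_value_Icc (by linarith : (-T) ≤ T) hψcont.continuousOn
      obtain ⟨t₀, htm, hv⟩ := hIVT ⟨h₂, h₁⟩
      exact ⟨t₀, htm, hv⟩
    -- conclude
    refine ⟨↑(wt t₀) + t₀ • e, ?_⟩
    set d : V := S (↑(wt t₀) + t₀ • e) - b with hddef
    have hdW : ∀ z : V, z ∈ W → ⟪d, z⟫_ℝ = 0 := by
      intro z hz
      have hp3 : ((orthogonalProjection W (S (↑(wt t₀) + t₀ • e))) : V) =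
          ((orthogonalProjection W b) : V) := congrArg Subtype.val (hwt t₀)
      rw [hddef, inner_sub_left, ← proj_inner W (S (↑(wt t₀) + t₀ • e)) hz,
        ← proj_inner W b hz, hp3, sub_self]
    have hde : ⟪d, e⟫_ℝ = 0 := ht₀
    have hd0 : d = 0 := by
      have hsup : (ℝ ∙ e) ⊔ (ℝ ∙ e)ᗮ = ⊤ := Submodule.sup_orthogonal_of_hasOrthogonalProjection
      have hdmem : d ∈ (ℝ ∙ e) ⊔ (ℝ ∙ e)ᗮ := by rw [hsup]; exact Submodule.mem_top
      obtain ⟨z₁, hz₁, z₂, hz₂, hsum⟩ := Submodule.mem_sup.mp hdmem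
      obtain ⟨α, hα⟩ := Submodule.mem_span_singleton.mp hz₁
      have hi1 : ⟪d, z₁⟫_ℝ = 0 := by rw [← hα, real_inner_smul_right, hde]; ring
      have hi2 : ⟪d, z₂⟫_ℝ = 0 := hdW z₂ hz₂
      have hself : ⟪d, d⟫_ℝ = 0 := by
        calc ⟪d, d⟫_ℝ = ⟪d, z₁ + z₂⟫_ℝ := by rw [← hsum]
          _ = ⟪d, z₁⟫_ℝ + ⟪d, z₂⟫_ℝ := inner_add_right _ _ _
          _ = 0 := by rw [hi1, hi2]; ring
      exact inner_self_eq_zero.mp hself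
    rw [hddef] at hd0
    exact sub_eq_zero.mp hd0

/-- surjectivity of continuous strongly monotone maps on a real Hilbert space -/
lemma minty_surj {H : Type u} [NormedAddCommGroup H] [InnerProductSpace ℝ H] [CompleteSpace H]
    {c : ℝ} (hc : 0 < c) (S : H → H) (hS : Continuous S)
    (hmono : ∀ x y : H, c * ‖x - y‖ ^ 2 ≤ ⟪S x - S y, x - y⟫_ℝ) (b : H) : ∃ x, S x = b := by
  classical
  let D := {p : Submodule ℝ H // FiniteDimensional ℝ ↥p}
  haveI : Nonempty D := ⟨⟨⊥, inferInstance⟩⟩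
  haveI hdir : IsDirected D (· ≤ ·) := ⟨fun p q => by
    haveI := p.2; haveI := q.2
    exact ⟨⟨p.1 ⊔ q.1, inferInstance⟩, Subtype.coe_le_coe.mp le_sup_left,
      Subtype.coe_le_coe.mp le_sup_right⟩⟩
  haveI hnb : (atTop : Filter D).NeBot := atTop_neBot_iff.mpr ⟨inferInstance, hdir⟩
  let F : Ultrafilter D := Ultrafilter.of atTop
  have hF : (F : Filter D) ≤ atTop := Ultrafilter.of_le _
  have hex : ∀ p : D, ∃ w : H, w ∈ p.1 ∧ ∀ z ∈ p.1, ⟪S w - b, z⟫_ℝ = 0 := by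
    intro p
    haveI := p.2
    haveI : CompleteSpace ↥p.1 := FiniteDimensional.complete ℝ p.1
    obtain ⟨w, hw⟩ := galerkin_exists p.1 hc S hS hmono
      (fun T hT hm => minty_fd (finrank ℝ ↥p.1) rfl hc T hT hm) b
    refine ⟨↑w, w.2, fun z hz => ?_⟩
    have hp3 : ((orthogonalProjection p.1 (S ↑w)) : H) =
        ((orthogonalProjection p.1 b) : H) := congrArg Subtype.val hw
    rw [inner_sub_left, ← proj_inner p.1 (S ↑w) hz, ← proj_inner p.1 b hz, hp3, sub_self]
  choose x hxmem horth using hex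
  set R : ℝ := ‖b - S 0‖ / c with hR
  have hbd : ∀ p : D, ‖x p‖ ≤ R := by
    intro p
    have h1 := hmono (x p) 0
    simp only [sub_zero] at h1
    have h2 : ⟪S (x p) - S 0, x p⟫_ℝ = ⟪S (x p) - b, x p⟫_ℝ + ⟪b - S 0, x p⟫_ℝ := by
      rw [← inner_add_left]; congr 1; abel
    rw [h2, horth p (x p) (hxmem p), zero_add] at h1
    have h3 := real_inner_le_norm (b - S 0) (x p)
    have h4 : c * ‖x p‖ ≤ ‖b - S 0‖ := cx_le hc (norm_nonneg _) (norm_nonneg _) (h1.trans h3)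
    rw [hR, le_div_iff₀ hc]
    linarith
  have hlim : ∀ v : H, ∃ L : ℝ, |L| ≤ R * ‖v‖ ∧
      Tendsto (fun p => ⟪x p, v⟫_ℝ) F (nhds L) := by
    intro v
    have hmem : ∀ p : D, ⟪x p, v⟫_ℝ ∈ Set.Icc (-(R * ‖v‖)) (R * ‖v‖) := by
      intro p
      have h1 : |⟪x p, v⟫_ℝ| ≤ R * ‖v‖ := le_trans (abs_real_inner_le_norm _ _)
        (mul_le_mul_of_nonneg_right (hbd p) (norm_nonneg v))
      exact abs_le.mp h1
    obtain ⟨L, hLmem, hLle⟩ := isCompact_Icc.ultrafilter_le_nhds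
      (F.map (fun p => ⟪x p, v⟫_ℝ))
      (by rw [Ultrafilter.coe_map, le_principal_iff]
          exact Filter.mem_map.mpr (Filter.univ_mem' hmem))
    refine ⟨L, abs_le.mpr ⟨hLmem.1, hLmem.2⟩, ?_⟩
    rwa [Ultrafilter.coe_map] at hLle
  choose g hgbd hg using hlim
  have hadd : ∀ v w : H, g (v + w) = g v + g w := by
    intro v w
    have h1 : Tendsto (fun p => ⟪x p, v + w⟫_ℝ) F (nhds (g v + g w)) := by
      simp only [inner_add_right]
      exact (hg v).add (hg w)
    exact tendsto_nhds_unique (hg (v + w)) h1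
  have hsmul : ∀ (a : ℝ) (v : H), g (a • v) = a * g v := by
    intro a v
    have h1 : Tendsto (fun p => ⟪x p, a • v⟫_ℝ) F (nhds (a * g v)) := by
      simp only [real_inner_smul_right]
      exact (hg v).const_mul a
    exact tendsto_nhds_unique (hg (a • v)) h1
  let gl : H →ₗ[ℝ] ℝ :=
    { toFun := g, map_add' := hadd, map_smul' := hsmul }
  let G : H →L[ℝ] ℝ := LinearMap.mkContinuous gl R (fun v => by
    rw [Real.norm_eq_abs]; exact hgbd v)
  set xx : H := (InnerProductSpace.toDual ℝ H).symm G with hxx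
  have hxv : ∀ v : H, ⟪xx, v⟫_ℝ = g v := fun v => InnerProductSpace.toDual_symm_apply
  have hineq : ∀ v : H, 0 ≤ ⟪S v - b, v - xx⟫_ℝ := by
    intro v
    have h1 : Tendsto (fun p => ⟪x p, S v - b⟫_ℝ) F (nhds (g (S v - b))) := hg _
    have h2 : Tendsto (fun p => ⟪S v - b, v⟫_ℝ - ⟪x p, S v - b⟫_ℝ) F
        (nhds (⟪S v - b, v⟫_ℝ - g (S v - b))) := tendsto_const_nhds.sub h1
    have h3 : ∀ p, ⟪S v - b, v - x p⟫_ℝ = ⟪S v - b, v⟫_ℝ - ⟪x p, S v - b⟫_ℝ := by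
      intro p
      rw [inner_sub_right, real_inner_comm (x p) (S v - b)]
    have h2 := h2.congr (fun p => (h3 p).symm)
    have h4 : ⟪S v - b, v - xx⟫_ℝ = ⟪S v - b, v⟫_ℝ - g (S v - b) := by
      rw [inner_sub_right, real_inner_comm xx (S v - b), hxv]
    rw [← h4] at h2
    have hev0 : ∀ᶠ p in (atTop : Filter D), 0 ≤ ⟪S v - b, v - x p⟫_ℝ := by
      have hq : ∃ q : D, v ∈ q.1 :=
        ⟨⟨ℝ ∙ v, inferInstance⟩, Submodule.mem_span_singleton_self v⟩
      obtain ⟨q, hqv⟩ := hq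
      filter_upwards [eventually_ge_atTop q] with p hp
      have hv : v ∈ p.1 := hp hqv
      have hsub : v - x p ∈ p.1 := Submodule.sub_mem _ hv (hxmem p)
      have h5 : ⟪S v - b, v - x p⟫_ℝ =
          ⟪S v - S (x p), v - x p⟫_ℝ + ⟪S (x p) - b, v - x p⟫_ℝ := by
        rw [← inner_add_left]; congr 1; abel
      rw [h5, horth p _ hsub, add_zero]
      have h6 := hmono v (x p)
      nlinarith [sq_nonneg ‖v - x p‖]
    exact ge_of_tendsto h2 (hev0.filter_mono hF)
  have hkey : ∀ w : H, 0 ≤ ⟪S xx - b, w⟫_ℝ := by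
    intro w
    have hpos : ∀ t : ℝ, 0 < t → 0 ≤ ⟪S (xx + t • w) - b, w⟫_ℝ := by
      intro t ht
      have h1 := hineq (xx + t • w)
      have h2 : xx + t • w - xx = t • w := by abel
      rw [h2, real_inner_smul_right] at h1
      nlinarith
    have htend : Tendsto (fun t : ℝ => ⟪S (xx + t • w) - b, w⟫_ℝ)
        (nhdsWithin 0 (Set.Ioi 0)) (nhds (⟪S xx - b, w⟫_ℝ)) := by
      have hcont2 : Continuous fun t : ℝ => ⟪S (xx + t • w) - b, w⟫_ℝ :=
        Continuous.inner ((hS.comp (continuous_const.add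
          (continuous_id.smul continuous_const))).sub continuous_const) continuous_const
      have h3 := hcont2.tendsto 0
      simp only [zero_smul, add_zero] at h3
      exact h3.mono_left nhdsWithin_le_nhds
    exact ge_of_tendsto htend (eventually_nhdsWithin_of_forall (fun t ht => hpos t ht))
  have hfinal := hkey (b - S xx)
  have h7 : ⟪S xx - b, b - S xx⟫_ℝ = -(‖S xx - b‖ ^ 2) := by
    rw [show b - S xx = -(S xx - b) by abel, inner_neg_right, real_inner_self_eq_norm_sq]
  rw [h7] at hfinal
  have h8 : ‖S xx - b‖ = 0 := by nlinarith [sq_nonneg ‖S xx - b‖]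
  exact ⟨xx, sub_eq_zero.mp (norm_eq_zero.mp h8)⟩

/-- For continuous monotone `φ` and coercive `Q`, the equation `y = r + Q φ(u − y)` has a
unique solution `y` for every `u, r`. -/
theorem stmt4 {U : Type*} [NormedAddCommGroup U] [InnerProductSpace ℂ U] [CompleteSpace U]
    (φ : U → U) (hcont : Continuous φ)
    (hmono : ∀ u₁ u₂ : U, 0 ≤ (⟪φ u₂ - φ u₁, u₂ - u₁⟫_ℂ).re)
    (Q : U →L[ℂ] U) (c : ℝ) (hc : 0 < c)
    (hQ : ∀ u : U, c * ‖u‖ ^ 2 ≤ (⟪Q u, u⟫_ℂ).re) :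
    ∀ u r : U, ∃! y : U, y = r + Q (φ (u - y)) := by
  have hresymm : ∀ x y : U, (⟪x, y⟫_ℂ).re = (⟪y, x⟫_ℂ).re := by
    intro x y
    rw [← inner_conj_symm x y]
    exact Complex.conj_re _
  -- uniqueness of solutions
  have huniq : ∀ u r y₁ y₂ : U, y₁ = r + Q (φ (u - y₁)) → y₂ = r + Q (φ (u - y₂)) → y₁ = y₂ := by
    intro u r y₁ y₂ h1 h2
    set eph : U := φ (u - y₂) - φ (u - y₁) with heph
    have hd : y₂ - y₁ = Q eph := by
      rw [heph, map_sub]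
      nth_rewrite 1 [h2, h1]
      abel
    have hm := hmono (u - y₂) (u - y₁)
    have he1 : φ (u - y₁) - φ (u - y₂) = -eph := by rw [heph]; abel
    have he2 : (u - y₁) - (u - y₂) = Q eph := by rw [← hd]; abel
    rw [he1, he2, inner_neg_left] at hm
    simp only [Complex.neg_re] at hm
    have h6 : c * ‖eph‖ ^ 2 ≤ (⟪Q eph, eph⟫_ℂ).re := hQ eph
    rw [← hresymm] at h6
    have h7 : ‖eph‖ = 0 := by
      by_contra hne
      have hp : 0 < ‖eph‖ := lt_of_le_of_ne (norm_nonneg _) (Ne.symm hne)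
      nlinarith [mul_pos hc (mul_pos hp hp)]
    have h8 : eph = 0 := norm_eq_zero.mp h7
    have h9 : y₂ - y₁ = 0 := by rw [hd, h8, map_zero]
    have := sub_eq_zero.mp h9
    exact this.symm
  intro u r
  letI : InnerProductSpace ℝ U := InnerProductSpace.rclikeToReal ℂ U
  have hre : ∀ x y : U, ⟪x, y⟫_ℝ = (⟪x, y⟫_ℂ).re := fun x y => rfl
  set A := ContinuousLinearMap.adjoint Q with hA
  set S : U → U := fun w => A (w - φ (u - r - Q w)) with hS
  have hScont : Continuous S :=
    A.continuous.comp (continuous_id.sub (hcont.comp (continuous_const.sub Q.continuous)))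
  have hAinner : ∀ z w : U, ⟪A z, w⟫_ℂ = ⟪z, Q w⟫_ℂ := fun z w =>
    ContinuousLinearMap.adjoint_inner_left Q w z
  have hSmono : ∀ x y : U, c * ‖x - y‖ ^ 2 ≤ ⟪S x - S y, x - y⟫_ℝ := by
    intro x y
    set ax : U := u - r - Q x with hax
    set ay : U := u - r - Q y with hay
    have hQd : Q (x - y) = ay - ax := by rw [map_sub, hax, hay]; abel
    have key : S x - S y = A ((x - y) - (φ ax - φ ay)) := by
      rw [hS]
      simp only [← map_sub]
      congr 1
      abel
    rw [hre, key, hAinner]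
    have h1 : c * ‖x - y‖ ^ 2 ≤ (⟪x - y, Q (x - y)⟫_ℂ).re := by
      rw [hresymm]; exact hQ (x - y)
    have h2 : 0 ≤ (⟪φ ax - φ ay, ax - ay⟫_ℂ).re := hmono ay ax
    have h3 : (⟪φ ax - φ ay, Q (x - y)⟫_ℂ).re = -(⟪φ ax - φ ay, ax - ay⟫_ℂ).re := by
      rw [hQd, show ay - ax = -(ax - ay) by abel, inner_neg_right, Complex.neg_re]
    have h4 : (⟪(x - y) - (φ ax - φ ay), Q (x - y)⟫_ℂ).re =
        (⟪x - y, Q (x - y)⟫_ℂ).re - (⟪φ ax - φ ay, Q (x - y)⟫_ℂ).re := by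
      rw [inner_sub_left, Complex.sub_re]
    rw [h4, h3]
    linarith
  obtain ⟨w, hw⟩ := minty_surj hc S hScont hSmono 0
  have hv0 : A (w - φ (u - r - Q w)) = 0 := hw
  have hz : w - φ (u - r - Q w) = 0 := by
    set v : U := w - φ (u - r - Q w) with hv
    have h5 : (⟪A v, v⟫_ℂ) = 0 := by rw [hv0, inner_zero_left]
    have h6 : (⟪v, Q v⟫_ℂ) = 0 := by rw [← hAinner]; exact h5
    have h7 : c * ‖v‖ ^ 2 ≤ 0 := by
      have := hQ v
      rw [← hresymm, h6] at this
      simpa using this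
    have h8 : ‖v‖ = 0 := by
      by_contra hne
      have hp : 0 < ‖v‖ := lt_of_le_of_ne (norm_nonneg _) (Ne.symm hne)
      nlinarith [mul_pos hc (mul_pos hp hp)]
    exact norm_eq_zero.mp h8
  have hwphi : w = φ (u - r - Q w) := sub_eq_zero.mp hz
  refine ⟨r + Q w, ?_, ?_⟩
  · show r + Q w = r + Q (φ (u - (r + Q w)))
    have huy : u - (r + Q w) = u - r - Q w := by abel
    rw [huy, ← hwphi]
  · intro y' hy'
    exact huniq u r y' (r + Q w) hy'
      (by show r + Q w = r + Q (φ (u - (r + Q w)))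
          have huy : u - (r + Q w) = u - r - Q w := by abel
          rw [huy, ← hwphi])
end

section
/- Let ψ : [0,∞) → [0,∞) be non-decreasing, globally Lipschitz with constant L, and ψ(0) = 0. Define φ : U → U on a complex Hilbert space U by φ(0) = 0 and φ(u) = ψ(‖u‖)·u/‖u‖ for u ≠ 0. Then Re⟨φ(u₂) − φ(u₁), u₂ − u₁⟩ ≥ (1/L)‖φ(u₂) − φ(u₁)‖² for all u₁, u₂ ∈ U. -/
open scoped InnerProductSpace

private lemma re_inner_smul_left' {U : Type*} [NormedAddCommGroup U] [InnerProductSpace ℂ U]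
    (c : ℝ) (x y : U) : (⟪c • x, y⟫_ℂ).re = c * (⟪x, y⟫_ℂ).re := by
  rw [← Complex.coe_smul, inner_smul_left]; simp

private lemma re_inner_smul_right' {U : Type*} [NormedAddCommGroup U] [InnerProductSpace ℂ U]
    (c : ℝ) (x y : U) : (⟪x, c • y⟫_ℂ).re = c * (⟪x, y⟫_ℂ).re := by
  rw [← Complex.coe_smul, inner_smul_right]; simp

private lemma re_inner_self' {U : Type*} [NormedAddCommGroup U] [InnerProductSpace ℂ U]
    (x : U) : (⟪x, x⟫_ℂ).re = ‖x‖ ^ 2 := by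
  rw [← @inner_self_eq_norm_sq ℂ]; rfl

private lemma key_ineq (L a b r s t : ℝ) (hL : 0 < L) (hr : 0 < r) (hs : 0 < s)
    (ha : 0 ≤ a) (hb : 0 ≤ b) (haL : a ≤ L * r) (hbL : b ≤ L * s)
    (hlip : (a - b) ^ 2 ≤ L * ((b - a) * (s - r))) (ht : |t| ≤ s * r) :
    (1 / L) * (b ^ 2 - 2 * ((b / s) * (a / r)) * t + a ^ 2) ≤
      b * s + a * r - ((b / s) + (a / r)) * t := by
  have h1t : 0 ≤ r * s - t := by
    have := (abs_le.mp ht).2; linarith [mul_comm s r]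
  have h2t : 0 ≤ r * s + t := by
    have := (abs_le.mp ht).1; linarith [mul_comm s r]
  have hA : 0 ≤ L * ((b - a) * (s - r)) - (a - b) ^ 2 := by linarith
  have hB : 0 ≤ L * ((a + b) * (r + s)) - (a + b) ^ 2 := by nlinarith
  have hrs : 0 < r * s := mul_pos hr hs
  have hmain : b ^ 2 - 2 * ((b / s) * (a / r)) * t + a ^ 2 ≤
      L * (b * s + a * r - ((b / s) + (a / r)) * t) := by
    rw [← mul_le_mul_iff_right₀ hrs]
    have e1 : r * s * (b ^ 2 - 2 * ((b / s) * (a / r)) * t + a ^ 2) =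
        r * s * (b ^ 2 + a ^ 2) - 2 * a * b * t := by
      field_simp; ring
    have e2 : r * s * (L * (b * s + a * r - ((b / s) + (a / r)) * t)) =
        L * (r * s * (b * s + a * r) - (b * r + a * s) * t) := by
      field_simp
    rw [e1, e2]
    nlinarith [mul_nonneg h1t hA, mul_nonneg h2t hB]
  calc (1 / L) * (b ^ 2 - 2 * ((b / s) * (a / r)) * t + a ^ 2)
      ≤ (1 / L) * (L * (b * s + a * r - ((b / s) + (a / r)) * t)) := by
        apply mul_le_mul_of_nonneg_left hmain (by positivity)
    _ = b * s + a * r - ((b / s) + (a / r)) * t := by field_simp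

/-- The radial function `φ(u) = ψ(‖u‖)·u/‖u‖` (with `φ(0)=0`) induced by a non-decreasing,
`L`-Lipschitz `ψ : [0,∞) → [0,∞)` with `ψ(0)=0` satisfies
`Re⟨φ(u₂) − φ(u₁), u₂ − u₁⟩ ≥ (1/L)‖φ(u₂) − φ(u₁)‖²`. -/
theorem stmt8 {U : Type*} [NormedAddCommGroup U] [InnerProductSpace ℂ U] [CompleteSpace U]
    (ψ : ℝ → ℝ) (L : ℝ) (hL : 0 < L)
    (hψ0 : ψ 0 = 0)
    (hψnonneg : ∀ r : ℝ, 0 ≤ r → 0 ≤ ψ r)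
    (hψmono : ∀ r s : ℝ, 0 ≤ r → r ≤ s → ψ r ≤ ψ s)
    (hψlip : ∀ r s : ℝ, 0 ≤ r → 0 ≤ s → |ψ r - ψ s| ≤ L * |r - s|)
    (φ : U → U) (hφ0 : φ 0 = 0)
    (hφ : ∀ u : U, u ≠ 0 → φ u = (ψ ‖u‖ / ‖u‖) • u) :
    ∀ u₁ u₂ : U, (1 / L) * ‖φ u₂ - φ u₁‖ ^ 2 ≤ (⟪φ u₂ - φ u₁, u₂ - u₁⟫_ℂ).re := by
  have hψL : ∀ r : ℝ, 0 ≤ r → ψ r ≤ L * r := by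
    intro r hr
    have h := hψlip r 0 hr le_rfl
    rw [hψ0, sub_zero, sub_zero, abs_of_nonneg (hψnonneg r hr), abs_of_nonneg hr] at h
    exact h
  intro u₁ u₂
  by_cases h1 : u₁ = 0
  · by_cases h2 : u₂ = 0
    · subst h1; subst h2; simp [hφ0]
    · subst h1
      have hs : 0 < ‖u₂‖ := norm_pos_iff.mpr h2
      have hb : 0 ≤ ψ ‖u₂‖ := hψnonneg _ hs.le
      rw [hφ0, hφ u₂ h2, sub_zero, sub_zero]
      have hn : ‖(ψ ‖u₂‖ / ‖u₂‖) • u₂‖ = ψ ‖u₂‖ := by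
        rw [norm_smul, Real.norm_eq_abs, abs_of_nonneg (div_nonneg hb hs.le)]
        field_simp
      have hi : (⟪(ψ ‖u₂‖ / ‖u₂‖) • u₂, u₂⟫_ℂ).re = ψ ‖u₂‖ * ‖u₂‖ := by
        rw [re_inner_smul_left', re_inner_self']
        field_simp
      rw [hn, hi, one_div_mul_eq_div, div_le_iff₀ hL]
      nlinarith [hψL ‖u₂‖ hs.le]
  · by_cases h2 : u₂ = 0
    · subst h2
      have hr : 0 < ‖u₁‖ := norm_pos_iff.mpr h1
      have ha : 0 ≤ ψ ‖u₁‖ := hψnonneg _ hr.le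
      rw [hφ0, hφ u₁ h1, zero_sub, zero_sub, norm_neg, inner_neg_neg]
      have hn : ‖(ψ ‖u₁‖ / ‖u₁‖) • u₁‖ = ψ ‖u₁‖ := by
        rw [norm_smul, Real.norm_eq_abs, abs_of_nonneg (div_nonneg ha hr.le)]
        field_simp
      have hi : (⟪(ψ ‖u₁‖ / ‖u₁‖) • u₁, u₁⟫_ℂ).re = ψ ‖u₁‖ * ‖u₁‖ := by
        rw [re_inner_smul_left', re_inner_self']
        field_simp
      rw [hn, hi, one_div_mul_eq_div, div_le_iff₀ hL]
      nlinarith [hψL ‖u₁‖ hr.le]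
    · -- general case
      have hr : 0 < ‖u₁‖ := norm_pos_iff.mpr h1
      have hs : 0 < ‖u₂‖ := norm_pos_iff.mpr h2
      set r := ‖u₁‖ with hrdef
      set s := ‖u₂‖ with hsdef
      set a := ψ r with hadef
      set b := ψ s with hbdef
      set t := (⟪u₂, u₁⟫_ℂ).re with htdef
      have ha : 0 ≤ a := hψnonneg _ hr.le
      have hb : 0 ≤ b := hψnonneg _ hs.le
      have haL : a ≤ L * r := hψL _ hr.le
      have hbL : b ≤ L * s := hψL _ hs.le
      have hmono : 0 ≤ (b - a) * (s - r) := by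
        rcases le_total r s with h | h
        · have := hψmono r s hr.le h
          exact mul_nonneg (by linarith) (by linarith)
        · have := hψmono s r hs.le h
          have := mul_nonneg (by linarith : (0:ℝ) ≤ a - b) (by linarith : (0:ℝ) ≤ r - s)
          nlinarith
      have hlip : (a - b) ^ 2 ≤ L * ((b - a) * (s - r)) := by
        have h3 : |a - b| ≤ L * |r - s| := hψlip r s hr.le hs.le
        have h4 : |(a - b) * (r - s)| = (b - a) * (s - r) := by
          rw [abs_of_nonneg (by nlinarith)]
          ring
        calc (a - b) ^ 2 = |a - b| * |a - b| := by rw [abs_mul_abs_self, sq]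
          _ ≤ (L * |r - s|) * |a - b| := mul_le_mul_of_nonneg_right h3 (abs_nonneg _)
          _ = L * |(a - b) * (r - s)| := by rw [abs_mul]; ring
          _ = L * ((b - a) * (s - r)) := by rw [h4]
      have ht : |t| ≤ s * r := by
        have := norm_inner_le_norm (𝕜 := ℂ) u₂ u₁
        exact (Complex.abs_re_le_norm _).trans this
      have hφ1 : φ u₁ = (a / r) • u₁ := hφ u₁ h1
      have hφ2 : φ u₂ = (b / s) • u₂ := hφ u₂ h2
      have hnorm : ‖φ u₂ - φ u₁‖ ^ 2 = b ^ 2 - 2 * ((b / s) * (a / r)) * t + a ^ 2 := by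
        have hns : ‖φ u₂ - φ u₁‖ ^ 2 = ‖φ u₂‖ ^ 2 - 2 * (⟪φ u₂, φ u₁⟫_ℂ).re + ‖φ u₁‖ ^ 2 :=
          norm_sub_sq (𝕜 := ℂ) _ _
        rw [hns, hφ1, hφ2]
        have hn2 : ‖(b / s) • u₂‖ = b := by
          rw [norm_smul, Real.norm_eq_abs, abs_of_nonneg (div_nonneg hb hs.le)]
          field_simp; rfl
        have hn1 : ‖(a / r) • u₁‖ = a := by
          rw [norm_smul, Real.norm_eq_abs, abs_of_nonneg (div_nonneg ha hr.le)]
          field_simp; rfl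
        rw [hn1, hn2, re_inner_smul_left', re_inner_smul_right']
        ring
      have hinner : (⟪φ u₂ - φ u₁, u₂ - u₁⟫_ℂ).re =
          b * s + a * r - ((b / s) + (a / r)) * t := by
        rw [inner_sub_left, inner_sub_right, inner_sub_right]
        simp only [Complex.sub_re]
        rw [hφ1, hφ2, re_inner_smul_left', re_inner_smul_left', re_inner_smul_left',
          re_inner_smul_left', re_inner_self', re_inner_self']
        have h12 : (⟪u₁, u₂⟫_ℂ).re = t := inner_re_symm (𝕜 := ℂ) u₁ u₂
        rw [h12, ← htdef]
        field_simp
        ring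
      rw [hnorm, hinner]
      exact key_ineq L a b r s t hL hr hs ha hb haL hbL hlip ht
end

section
/- Let X, U be complex Hilbert spaces, A the generator of a strongly continuous semigroup on X with λ ∈ ρ(A) for some λ > 0, B ∈ L(U, X₋₁) with (λ − A)⁻¹B ∈ L(U, X), and suppose the system node is impedance passive, i.e., Re⟨Ax + Bu, x⟩ ≤ Re⟨C&D(x,u), u⟩ for all (x,u) in the system node domain. Then for all u ∈ U and λ > 0, λ‖(λ − A)⁻¹Bu‖² ≤ Re⟨P(λ)u, u⟩, where P(λ)u = C&D((λ−A)⁻¹Bu, u) is the transfer function. Consequently ‖(λ−A)⁻¹B‖² ≤ ‖P(λ)‖/λ. -/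
open scoped InnerProductSpace

/-- For an impedance passive system node `S = [A&B; C&D]` with domain `Dom`, whose transfer
function is `P(λ)u = C&D((λ−A)⁻¹Bu, u)`, one has `λ‖(λ−A)⁻¹Bu‖² ≤ Re⟨P(λ)u, u⟩` for all
`u`, and consequently `‖(λ−A)⁻¹B‖² ≤ ‖P(λ)‖/λ`.  Here `RB = (λ−A)⁻¹B`, and the defining
property of `RB` is expressed by `A&B((λ−A)⁻¹Bu, u) = λ·(λ−A)⁻¹Bu`. -/
theorem stmt15 {X U : Type*}
    [NormedAddCommGroup X] [InnerProductSpace ℂ X] [CompleteSpace X]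
    [NormedAddCommGroup U] [InnerProductSpace ℂ U] [CompleteSpace U]
    (Dom : Set (X × U)) (AB : X × U → X) (CD : X × U → U)
    (hpass : ∀ p ∈ Dom, (⟪AB p, p.1⟫_ℂ).re ≤ (⟪CD p, p.2⟫_ℂ).re)
    (lam : ℝ) (hlam : 0 < lam)
    (RB : U →L[ℂ] X)
    (hdom : ∀ u : U, (RB u, u) ∈ Dom)
    (hAB : ∀ u : U, AB (RB u, u) = (lam : ℂ) • RB u)
    (P : U →L[ℂ] U) (hP : ∀ u : U, P u = CD (RB u, u)) :
    (∀ u : U, lam * ‖RB u‖ ^ 2 ≤ (⟪P u, u⟫_ℂ).re) ∧ ‖RB‖ ^ 2 ≤ ‖P‖ / lam := by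
  have key : ∀ u : U, lam * ‖RB u‖ ^ 2 ≤ (⟪P u, u⟫_ℂ).re := by
    intro u
    have h := hpass (RB u, u) (hdom u)
    simp only [hAB u] at h
    rw [inner_smul_left] at h
    have hre : ((starRingEnd ℂ) (lam : ℂ) * ⟪RB u, RB u⟫_ℂ).re = lam * ‖RB u‖ ^ 2 := by
      rw [inner_self_eq_norm_sq_to_K, Complex.conj_ofReal]
      simp [Complex.mul_re, ← Complex.ofReal_pow]
    rw [hre] at h
    rw [hP u]
    exact h
  refine ⟨key, ?_⟩
  have hbound : ∀ u : U, ‖RB u‖ ≤ Real.sqrt (‖P‖ / lam) * ‖u‖ := by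
    intro u
    have h1 := key u
    have h2 : (⟪P u, u⟫_ℂ).re ≤ ‖P‖ * ‖u‖ ^ 2 := by
      calc (⟪P u, u⟫_ℂ).re ≤ ‖⟪P u, u⟫_ℂ‖ := Complex.re_le_norm _
        _ ≤ ‖P u‖ * ‖u‖ := norm_inner_le_norm _ _
        _ ≤ (‖P‖ * ‖u‖) * ‖u‖ := by
            exact mul_le_mul_of_nonneg_right (P.le_opNorm u) (norm_nonneg u)
        _ = ‖P‖ * ‖u‖ ^ 2 := by ring
    have h3 : ‖RB u‖ ^ 2 ≤ (‖P‖ / lam) * ‖u‖ ^ 2 := by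
      rw [div_mul_eq_mul_div, le_div_iff₀ hlam]
      nlinarith
    calc ‖RB u‖ = Real.sqrt (‖RB u‖ ^ 2) := by
          rw [Real.sqrt_sq (norm_nonneg _)]
      _ ≤ Real.sqrt ((‖P‖ / lam) * ‖u‖ ^ 2) := Real.sqrt_le_sqrt h3
      _ = Real.sqrt (‖P‖ / lam) * ‖u‖ := by
          rw [Real.sqrt_mul (by positivity), Real.sqrt_sq (norm_nonneg _)]
  have hop : ‖RB‖ ≤ Real.sqrt (‖P‖ / lam) :=
    RB.opNorm_le_bound (Real.sqrt_nonneg _) hbound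
  calc ‖RB‖ ^ 2 ≤ Real.sqrt (‖P‖ / lam) ^ 2 := by
        exact pow_le_pow_left₀ (norm_nonneg _) hop 2
    _ = ‖P‖ / lam := Real.sq_sqrt (by positivity)
end
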